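/- Let (X,d) be a Robinson space with a compatible order <'. Let S ⊆ X be an mmodule of (X,d) that is an interval of <', and let <_S be a compatible order of the subspace (S,d). Define a total order < on X by: x < y iff either x,y ∈ S and x <_S y, or not both x,y belong to S and x <' y (i.e., < is obtained from <' by reordering the elements of S according to <_S). Then < is a compatible order of (X,d). -/

import Mathlib

structure Dissim (X : Type*) where
  d : X → X → ℝ
  symm : ∀ x y, d x y = d y x
  nonneg : ∀ x y, 0 ≤ d x y
  self : ∀ x, d x x = 0

variable {X : Type*}

def Compatible (D : Dissim X) (lt : X → X → Prop) : Prop :=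
  ∀ x y z : X, lt x y → lt y z → D.d x y ≤ D.d x z ∧ D.d y z ≤ D.d x z

def IsCompatOrder (D : Dissim X) (lt : X → X → Prop) : Prop :=
  IsStrictTotalOrder X lt ∧ Compatible D lt

def Robinson (D : Dissim X) : Prop :=
  ∃ lt : X → X → Prop, IsCompatOrder D lt

def IsMmodule (D : Dissim X) (M : Set X) : Prop :=
  ∀ z ∉ M, ∀ x ∈ M, ∀ y ∈ M, D.d z x = D.d z y

def IsInterval (lt : X → X → Prop) (I : Set X) : Prop :=
  ∀ a b c : X, lt a b → lt b c → a ∈ I → c ∈ I → b ∈ I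

def IsBlock (D : Dissim X) (Y : Set X) : Prop :=
  ∀ lt : X → X → Prop, IsCompatOrder D lt → IsInterval lt Y

noncomputable def diam (D : Dissim X) (Y : Set X) : ℝ :=
  sSup (Set.image2 D.d Y Y)

def Gdelta (D : Dissim X) (δ : ℝ) : SimpleGraph X where
  Adj x y := x ≠ y ∧ D.d x y ≠ δ
  symm := by
    constructor; rintro x y ⟨hxy, hd⟩
    exact ⟨hxy.symm, by rw [D.symm]; exact hd⟩
  loopless := by constructor; rintro x ⟨h, -⟩; exact h rfl

def Gle (D : Dissim X) (δ : ℝ) : SimpleGraph X where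
  Adj x y := x ≠ y ∧ D.d x y ≤ δ
  symm := by
    constructor; rintro x y ⟨hxy, hd⟩
    exact ⟨hxy.symm, by rw [D.symm]; exact hd⟩
  loopless := by constructor; rintro x ⟨h, -⟩; exact h rfl

def Glt (D : Dissim X) (δ : ℝ) : SimpleGraph X where
  Adj x y := x ≠ y ∧ D.d x y < δ
  symm := by
    constructor; rintro x y ⟨hxy, hd⟩
    exact ⟨hxy.symm, by rw [D.symm]; exact hd⟩
  loopless := by constructor; rintro x ⟨h, -⟩; exact h rfl

def IsCompOf {V : Type*} (G : SimpleGraph V) (C : Set V) : Prop :=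
  ∃ x : V, C = {y | G.Reachable x y}

def MMax (D : Dissim X) : Set (Set X) :=
  {M | IsMmodule D M ∧ M ≠ Set.univ ∧
    ∀ M' : Set X, IsMmodule D M' → M' ≠ Set.univ → M ⊆ M' → M = M'}

def IsPartition {α : Type*} (P : Set (Set α)) : Prop :=
  (∀ A ∈ P, A.Nonempty) ∧
  (∀ A ∈ P, ∀ B ∈ P, A ≠ B → Disjoint A B) ∧
  ⋃₀ P = Set.univ

def IsCopartition {α : Type*} (P : Set (Set α)) : Prop :=
  IsPartition ((fun M => Mᶜ) '' P)

def SimpleGraph.restrictTo {V : Type*} (G : SimpleGraph V) (S : Set V) : SimpleGraph V where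
  Adj x y := x ∈ S ∧ y ∈ S ∧ G.Adj x y
  symm := by constructor; rintro x y ⟨hx, hy, h⟩; exact ⟨hy, hx, h.symm⟩
  loopless := by constructor; rintro x ⟨-, -, h⟩; exact G.irrefl h

def ConnectedWithin {V : Type*} (G : SimpleGraph V) (S : Set V) : Prop :=
  S.Nonempty ∧ ∀ x ∈ S, ∀ y ∈ S, (G.restrictTo S).Reachable x y

def IsCompWithin {V : Type*} (G : SimpleGraph V) (S : Set V) (C : Set V) : Prop :=
  ∃ x ∈ S, C = {y | (G.restrictTo S).Reachable x y}

def IsStrictTotalOrderOn {α : Type*} (S : Set α) (lt : α → α → Prop) : Prop :=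
  (∀ x ∈ S, ¬ lt x x) ∧
  (∀ x ∈ S, ∀ y ∈ S, ∀ z ∈ S, lt x y → lt y z → lt x z) ∧
  (∀ x ∈ S, ∀ y ∈ S, x ≠ y → (lt x y ∨ lt y x) ∧ ¬ (lt x y ∧ lt y x))

def CompatibleOn (D : Dissim X) (S : Set X) (lt : X → X → Prop) : Prop :=
  ∀ x ∈ S, ∀ y ∈ S, ∀ z ∈ S, lt x y → lt y z → D.d x y ≤ D.d x z ∧ D.d y z ≤ D.d x z

def IsCompatOrderOn (D : Dissim X) (S : Set X) (lt : X → X → Prop) : Prop :=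
  IsStrictTotalOrderOn S lt ∧ CompatibleOn D S lt

def FlatOn (D : Dissim X) (S : Set X) : Prop :=
  ∃ lt : X → X → Prop, IsCompatOrderOn D S lt ∧ (∃ x ∈ S, ∃ y ∈ S, lt x y) ∧
    ∀ lt' : X → X → Prop, IsCompatOrderOn D S lt' →
      (∀ x ∈ S, ∀ y ∈ S, (lt' x y ↔ lt x y)) ∨ (∀ x ∈ S, ∀ y ∈ S, (lt' x y ↔ lt y x))

def Flat (D : Dissim X) : Prop :=
  ∃ lt : X → X → Prop, IsCompatOrder D lt ∧ (∃ x y : X, lt x y) ∧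
    ∀ lt' : X → X → Prop, IsCompatOrder D lt' →
      (∀ x y : X, lt' x y ↔ lt x y) ∨ (∀ x y : X, lt' x y ↔ lt y x)

def IsCopointAt (D : Dissim X) (p : X) (C : Set X) : Prop :=
  IsMmodule D C ∧ C.Nonempty ∧ p ∉ C ∧
  ∀ C' : Set X, IsMmodule D C' → p ∉ C' → C ⊆ C' → C = C'

def bigGraph (D : Dissim X) (δ : ℝ) (I : Set (Set X)) : SimpleGraph (Set X) where
  Adj C C' := C ∈ I ∧ C' ∈ I ∧ C ≠ C' ∧ ∃ x ∈ C, ∃ y ∈ C', δ < D.d x y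
  symm := by
    constructor; rintro C C' ⟨hC, hC', hne, x, hx, y, hy, hd⟩
    exact ⟨hC', hC, hne.symm, y, hy, x, hx, by rw [D.symm]; exact hd⟩
  loopless := by constructor; rintro C ⟨-, -, hne, -⟩; exact hne rfl

/-- reordering an mmodule that is an interval of a compatible order
by a compatible order of the subspace yields a compatible order. -/
theorem stmt0 [Fintype X] [Nonempty X] (D : Dissim X)
    (lt' : X → X → Prop) (h' : IsCompatOrder D lt')
    (S : Set X) (hS : IsMmodule D S) (hInt : IsInterval lt' S)
    (ltS : X → X → Prop) (hltS : IsCompatOrderOn D S ltS)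
    (lt : X → X → Prop)
    (hlt : ∀ x y : X, lt x y ↔
      ((x ∈ S ∧ y ∈ S ∧ ltS x y) ∨ (¬ (x ∈ S ∧ y ∈ S) ∧ lt' x y))) :
    IsCompatOrder D lt := by
  obtain ⟨hSTO', hC'⟩ := h'
  haveI := hSTO'
  obtain ⟨⟨hirrS, htrS, htotS⟩, hCS⟩ := hltS
  have key1 : ∀ a ∈ S, ∀ b ∈ S, ∀ c ∉ S, lt' b c → lt' a c := by
    intro a ha b hb c hc hbc
    rcases trichotomous_of lt' a c with h | h | h
    · exact h
    · exact absurd ha (h ▸ hc)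
    · exact absurd (hInt b c a hbc h hb ha) hc
  have key2 : ∀ a ∈ S, ∀ b ∈ S, ∀ c ∉ S, lt' c b → lt' c a := by
    intro a ha b hb c hc hcb
    rcases trichotomous_of lt' c a with h | h | h
    · exact h
    · exact absurd ha (h ▸ hc)
    · exact absurd (hInt a c b h hcb ha hb) hc
  have htrans : ∀ x y z : X, lt x y → lt y z → lt x z := by
    intro x y z hxy hyz
    rw [hlt] at hxy hyz ⊢
    rcases hxy with ⟨hx, hy, hS1⟩ | ⟨hn1, h1⟩
    · rcases hyz with ⟨-, hz, hS2⟩ | ⟨hn2, h2⟩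
      · exact Or.inl ⟨hx, hz, htrS x hx y hy z hz hS1 hS2⟩
      · have hz : z ∉ S := fun hz => hn2 ⟨hy, hz⟩
        exact Or.inr ⟨fun h => hz h.2, key1 x hx y hy z hz h2⟩
    · rcases hyz with ⟨hy, hz, hS2⟩ | ⟨hn2, h2⟩
      · have hx : x ∉ S := fun hx => hn1 ⟨hx, hy⟩
        exact Or.inr ⟨fun h => hx h.1, key2 z hz y hy x hx h1⟩
      · have h3 : lt' x z := trans_of lt' h1 h2
        refine Or.inr ⟨?_, h3⟩
        rintro ⟨hx, hz⟩
        exact hn1 ⟨hx, hInt x y z h1 h2 hx hz⟩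
  have hirr : ∀ x : X, ¬ lt x x := by
    intro x hx
    rw [hlt] at hx
    rcases hx with ⟨hxs, -, h⟩ | ⟨-, h⟩
    · exact hirrS x hxs h
    · exact irrefl_of lt' x h
  have htri : ∀ x y : X, lt x y ∨ x = y ∨ lt y x := by
    intro x y
    rcases eq_or_ne x y with rfl | hne
    · exact Or.inr (Or.inl rfl)
    by_cases hxy : x ∈ S ∧ y ∈ S
    · rcases (htotS x hxy.1 y hxy.2 hne).1 with h | h
      · exact Or.inl ((hlt x y).2 (Or.inl ⟨hxy.1, hxy.2, h⟩))
      · exact Or.inr (Or.inr ((hlt y x).2 (Or.inl ⟨hxy.2, hxy.1, h⟩)))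
    · rcases trichotomous_of lt' x y with h | h | h
      · exact Or.inl ((hlt x y).2 (Or.inr ⟨hxy, h⟩))
      · exact Or.inr (Or.inl h)
      · exact Or.inr (Or.inr ((hlt y x).2 (Or.inr ⟨fun hc => hxy ⟨hc.2, hc.1⟩, h⟩)))
  constructor
  · exact { trichotomous := fun a b h1 h2 => by rcases htri a b with h | h | h <;> tauto, irrefl := hirr, trans := htrans }
  · intro x y z hxy hyz
    rw [hlt] at hxy hyz
    rcases hxy with ⟨hx, hy, hS1⟩ | ⟨hn1, h1⟩
    · rcases hyz with ⟨-, hz, hS2⟩ | ⟨hn2, h2⟩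
      · exact hCS x hx y hy z hz hS1 hS2
      · -- x,y ∈ S, z ∉ S, lt' y z
        have hz : z ∉ S := fun hz => hn2 ⟨hy, hz⟩
        have hdeq : D.d x z = D.d y z := by
          rw [D.symm x z, D.symm y z]; exact hS z hz x hx y hy
        have hxz : lt' x z := key1 x hx y hy z hz h2
        constructor
        · rcases trichotomous_of lt' x y with h | h | h
          · exact (hC' x y z h h2).1
          · simp [h, D.self, D.nonneg]
          · have := (hC' y x z h hxz).1
            rw [D.symm y x] at this
            exact this.trans hdeq.ge
        · exact hdeq.symm.le
    · rcases hyz with ⟨hy, hz, hS2⟩ | ⟨hn2, h2⟩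
      · -- x ∉ S, y,z ∈ S, lt' x y
        have hx : x ∉ S := fun hx => hn1 ⟨hx, hy⟩
        have hdeq : D.d x y = D.d x z := hS x hx y hy z hz
        have hxz : lt' x z := key2 z hz y hy x hx h1
        constructor
        · exact hdeq.le
        · rcases trichotomous_of lt' y z with h | h | h
          · exact (hC' x y z h1 h).2
          · simp [h, D.self, D.nonneg]
          · have := (hC' x z y hxz h).2
            rw [D.symm z y] at this
            exact this.trans hdeq.le
      · exact hC' x y z h1 h2
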